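/- (Main Lemma, first player Bob) Let D be a dinner with an odd number n of morsels (so Bob moves first and also moves last), and let m be any morsel of D. Then u_B(m) + χ_B(D − m) ≤ χ_B(D), where u_B(m) is the second coordinate of m. -/

import Mathlib

open Finset

/-- One step of the crossout process: at Alice's steps remove the remaining morsel of
minimal first coordinate, at Bob's steps the one of minimal second coordinate. -/
noncomputable def coAux (turnA : Bool) (D : Finset (ℝ × ℝ)) : List (ℝ × ℝ) :=
  if h : D.Nonempty then
    (if turnA then (Finset.exists_min_image D Prod.fst h).choose
      else (Finset.exists_min_image D Prod.snd h).choose) ::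
      coAux (!turnA)
        (D.erase (if turnA then (Finset.exists_min_image D Prod.fst h).choose
          else (Finset.exists_min_image D Prod.snd h).choose))
  else []
termination_by D.card
decreasing_by
  apply Finset.card_erase_lt_of_mem
  split
  · exact (Finset.exists_min_image D Prod.fst h).choose_spec.1
  · exact (Finset.exists_min_image D Prod.snd h).choose_spec.1

/-- The crossout sequence of a dinner, as a list `[m₁, m₂, …, mₙ]`. -/
noncomputable def crossoutList (D : Finset (ℝ × ℝ)) : List (ℝ × ℝ) := coAux true D

/-- `crossout D i` is the `i`-th morsel `mᵢ` (1-indexed) of the crossout sequence of `D`. -/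
noncomputable def crossout (D : Finset (ℝ × ℝ)) (i : ℕ) : ℝ × ℝ :=
  (crossoutList D).getD (i - 1) (0, 0)

/-- Totally ordered preferences: distinct morsels have distinct first coordinates and
distinct second coordinates. -/
def TotallyOrderedPrefs (D : Finset (ℝ × ℝ)) : Prop :=
  (∀ p ∈ D, ∀ q ∈ D, p.1 = q.1 → p = q) ∧ (∀ p ∈ D, ∀ q ∈ D, p.2 = q.2 → p = q)

/-- Alice's crossout score: sum of first coordinates of the even-indexed crossout morsels. -/
noncomputable def chiA (D : Finset (ℝ × ℝ)) : ℝ :=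
  ∑ i ∈ Finset.Icc 1 D.card, if Even i then (crossout D i).1 else 0

/-- Bob's crossout score: sum of second coordinates of the odd-indexed crossout morsels. -/
noncomputable def chiB (D : Finset (ℝ × ℝ)) : ℝ :=
  ∑ i ∈ Finset.Icc 1 D.card, if Odd i then (crossout D i).2 else 0
noncomputable def sL : Bool → List (ℝ × ℝ) → ℝ
  | _, [] => 0
  | b, a :: l => (if b then a.2 else 0) + sL (!b) l

noncomputable def chi (t : Bool) (D : Finset (ℝ × ℝ)) : ℝ := sL t (coAux t D)

lemma chi_empty (t : Bool) : chi t ∅ = 0 := by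
  unfold chi; rw [coAux]; simp [sL]

lemma chi_true_eq (D : Finset (ℝ × ℝ)) (h : D.Nonempty) :
    chi true D = (Finset.exists_min_image D Prod.fst h).choose.2
      + chi false (D.erase (Finset.exists_min_image D Prod.fst h).choose) := by
  unfold chi; rw [coAux]; simp [h, sL]

lemma chi_false_eq (D : Finset (ℝ × ℝ)) (h : D.Nonempty) :
    chi false D = chi true (D.erase (Finset.exists_min_image D Prod.snd h).choose) := by
  unfold chi; rw [coAux]; simp [h, sL]

lemma top_mono {D S : Finset (ℝ × ℝ)} (hS : S ⊆ D) (hD : TotallyOrderedPrefs D) :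
    TotallyOrderedPrefs S :=
  ⟨fun p hp q hq h => hD.1 p (hS hp) q (hS hq) h,
   fun p hp q hq h => hD.2 p (hS hp) q (hS hq) h⟩

lemma erase_comm' (s : Finset (ℝ × ℝ)) (a b : ℝ × ℝ) :
    (s.erase a).erase b = (s.erase b).erase a := by
  ext x; simp only [Finset.mem_erase]; tauto

lemma pickA_eq {D S : Finset (ℝ × ℝ)} (hD : TotallyOrderedPrefs D) (hS : S ⊆ D)
    (h : S.Nonempty) {x : ℝ × ℝ} (hx : x ∈ S) (hmin : ∀ p ∈ S, x.1 ≤ p.1) :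
    (Finset.exists_min_image S Prod.fst h).choose = x := by
  obtain ⟨hc, hcmin⟩ := (Finset.exists_min_image S Prod.fst h).choose_spec
  exact hD.1 _ (hS hc) _ (hS hx) (le_antisymm (hcmin x hx) (hmin _ hc))

lemma pickB_eq {D S : Finset (ℝ × ℝ)} (hD : TotallyOrderedPrefs D) (hS : S ⊆ D)
    (h : S.Nonempty) {x : ℝ × ℝ} (hx : x ∈ S) (hmin : ∀ p ∈ S, x.2 ≤ p.2) :
    (Finset.exists_min_image S Prod.snd h).choose = x := by
  obtain ⟨hc, hcmin⟩ := (Finset.exists_min_image S Prod.snd h).choose_spec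
  exact hD.2 _ (hS hc) _ (hS hx) (le_antisymm (hcmin x hx) (hmin _ hc))

lemma key : ∀ (n : ℕ) (D : Finset (ℝ × ℝ)), D.card ≤ n → TotallyOrderedPrefs D →
    ((Odd D.card → ∀ m ∈ D, m.2 + chi true (D.erase m) ≤ chi true D) ∧
     (Even D.card → chi true D ≤ chi false D)) := by
  intro n
  induction n with
  | zero =>
    intro D hcard _
    have hD0 : D = ∅ := Finset.card_eq_zero.mp (Nat.le_zero.mp hcard)
    subst hD0
    constructor
    · intro h; simp at h
    · intro _; simp [chi_empty]
  | succ n ih =>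
    intro D hcard hD
    constructor
    · -- P : the main lemma
      intro hodd m hm
      have hne : D.Nonempty := ⟨m, hm⟩
      obtain ⟨haD, hamin⟩ := (Finset.exists_min_image D Prod.fst hne).choose_spec
      set a := (Finset.exists_min_image D Prod.fst hne).choose with ha_def
      have hc1 : 1 ≤ D.card := Finset.card_pos.mpr hne
      rw [chi_true_eq D hne, ← ha_def]
      by_cases hma : m = a
      · rw [hma]
        have hQ := (ih (D.erase a) (by rw [Finset.card_erase_of_mem haD]; omega)
          (top_mono (Finset.erase_subset _ _) hD)).2 (by
            rw [Finset.card_erase_of_mem haD]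
            exact Nat.Odd.sub_odd hodd odd_one)
        linarith
      · have hmea : m ∈ D.erase a := Finset.mem_erase.mpr ⟨hma, hm⟩
        have haem : a ∈ D.erase m := Finset.mem_erase.mpr ⟨fun h => hma h.symm, haD⟩
        have hne2 : (D.erase m).Nonempty := ⟨a, haem⟩
        rw [chi_true_eq (D.erase m) hne2,
          pickA_eq hD (Finset.erase_subset _ _) hne2 haem
            (fun p hp => hamin p (Finset.mem_of_mem_erase hp))]
        have hneDa : (D.erase a).Nonempty := ⟨m, hmea⟩
        obtain ⟨hbDa, hbmin⟩ := (Finset.exists_min_image (D.erase a) Prod.snd hneDa).choose_spec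
        set b := (Finset.exists_min_image (D.erase a) Prod.snd hneDa).choose with hb_def
        rw [chi_false_eq (D.erase a) hneDa, ← hb_def]
        have hcard2 : 2 ≤ D.card := Finset.one_lt_card.mpr ⟨m, hm, a, haD, hma⟩
        have hcard3 : 3 ≤ D.card := by rcases hodd with ⟨k, hk⟩; omega
        rw [erase_comm' D m a]
        have hne3 : ((D.erase a).erase m).Nonempty := by
          rw [← Finset.card_pos, Finset.card_erase_of_mem hmea,
            Finset.card_erase_of_mem haD]
          omega
        rw [chi_false_eq ((D.erase a).erase m) hne3]
        obtain ⟨hb2mem, hb2min⟩ :=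
          (Finset.exists_min_image ((D.erase a).erase m) Prod.snd hne3).choose_spec
        set b2 := (Finset.exists_min_image ((D.erase a).erase m) Prod.snd hne3).choose
          with hb2_def
        have hcardam : ((D.erase a).erase m).card = D.card - 2 := by
          rw [Finset.card_erase_of_mem hmea, Finset.card_erase_of_mem haD]; omega
        have hoddam : Odd (D.card - 2) := by rcases hodd with ⟨k, hk⟩; exact ⟨k - 1, by omega⟩
        by_cases hmb : m = b
        · rw [← hmb]
          have hP := (ih ((D.erase a).erase m)
            (by rw [hcardam]; omega)
            (top_mono ((Finset.erase_subset _ _).trans (Finset.erase_subset _ _)) hD)).1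
            (by rw [hcardam]; exact hoddam) b2 hb2mem
          have hm2 : m.2 ≤ b2.2 := by
            rw [hmb]; exact hbmin b2 (Finset.mem_of_mem_erase hb2mem)
          linarith
        · have hbF : b ∈ (D.erase a).erase m := Finset.mem_erase.mpr ⟨fun h => hmb h.symm, hbDa⟩
          have hb2b : b2 = b := by
            rw [hb2_def]
            exact pickB_eq hD ((Finset.erase_subset _ _).trans (Finset.erase_subset _ _)) hne3 hbF
              (fun p hp => hbmin p (Finset.mem_of_mem_erase hp))
          rw [hb2b, erase_comm' (D.erase a) m b]
          have hcardab : ((D.erase a).erase b).card = D.card - 2 := by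
            rw [Finset.card_erase_of_mem hbDa, Finset.card_erase_of_mem haD]; omega
          have hP := (ih ((D.erase a).erase b)
            (by rw [hcardab]; omega)
            (top_mono ((Finset.erase_subset _ _).trans (Finset.erase_subset _ _)) hD)).1
            (by rw [hcardab]; exact hoddam) m (Finset.mem_erase.mpr ⟨hmb, hmea⟩)
          linarith
    · -- Q
      intro heven
      rcases D.eq_empty_or_nonempty with rfl | hne
      · simp [chi_empty]
      obtain ⟨haD, hamin⟩ := (Finset.exists_min_image D Prod.fst hne).choose_spec
      set a := (Finset.exists_min_image D Prod.fst hne).choose with ha_def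
      obtain ⟨hbD, hbmin⟩ := (Finset.exists_min_image D Prod.snd hne).choose_spec
      set b := (Finset.exists_min_image D Prod.snd hne).choose with hb_def
      rw [chi_true_eq D hne, ← ha_def, chi_false_eq D hne, ← hb_def]
      have hc1 : 1 ≤ D.card := Finset.card_pos.mpr hne
      have hcard2 : 2 ≤ D.card := by rcases heven with ⟨k, hk⟩; omega
      have hneDa : (D.erase a).Nonempty := by
        rw [← Finset.card_pos, Finset.card_erase_of_mem haD]; omega
      obtain ⟨hb'mem, hb'min⟩ := (Finset.exists_min_image (D.erase a) Prod.snd hneDa).choose_spec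
      set b' := (Finset.exists_min_image (D.erase a) Prod.snd hneDa).choose with hb'_def
      rw [chi_false_eq (D.erase a) hneDa, ← hb'_def]
      have hcarda : (D.erase a).card = D.card - 1 := Finset.card_erase_of_mem haD
      have hodda : Odd (D.card - 1) := by rcases heven with ⟨k, hk⟩; exact ⟨k - 1, by omega⟩
      by_cases hba : b = a
      · rw [hba]
        have hP := (ih (D.erase a) (by omega)
          (top_mono (Finset.erase_subset _ _) hD)).1
          (by rw [hcarda]; exact hodda) b' hb'mem
        have ha2 : a.2 ≤ b'.2 := by
          rw [← hba]; exact hbmin b' (Finset.mem_of_mem_erase hb'mem)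
        linarith
      · have hb'b : b' = b := by
          rw [hb'_def]
          exact pickB_eq hD (Finset.erase_subset _ _) hneDa
            (Finset.mem_erase.mpr ⟨hba, hbD⟩)
            (fun p hp => hbmin p (Finset.mem_of_mem_erase hp))
        rw [hb'b]
        have haeb : a ∈ D.erase b := Finset.mem_erase.mpr ⟨fun h => hba h.symm, haD⟩
        have hnedb : (D.erase b).Nonempty := ⟨a, haeb⟩
        rw [chi_true_eq (D.erase b) hnedb,
          pickA_eq hD (Finset.erase_subset _ _) hnedb haeb
            (fun p hp => hamin p (Finset.mem_of_mem_erase hp))]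
        rw [erase_comm' D b a]
        have hcardab : ((D.erase a).erase b).card = D.card - 2 := by
          rw [Finset.card_erase_of_mem (Finset.mem_erase.mpr ⟨hba, hbD⟩),
            Finset.card_erase_of_mem haD]
          omega
        have hQ := (ih ((D.erase a).erase b) (by omega)
          (top_mono ((Finset.erase_subset _ _).trans (Finset.erase_subset _ _)) hD)).2
          (by rw [hcardab]; rcases heven with ⟨k, hk⟩; exact ⟨k - 1, by omega⟩)
        linarith

lemma coAux_length (t : Bool) (D : Finset (ℝ × ℝ)) : (coAux t D).length = D.card := by
  induction D using Finset.strongInduction generalizing t with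
  | _ D ih =>
    rw [coAux]
    by_cases h : D.Nonempty
    · simp only [h, dif_pos, List.length_cons]
      have hmem : (if t then (Finset.exists_min_image D Prod.fst h).choose
          else (Finset.exists_min_image D Prod.snd h).choose) ∈ D := by
        cases t
        · simpa using (Finset.exists_min_image D Prod.snd h).choose_spec.1
        · simpa using (Finset.exists_min_image D Prod.fst h).choose_spec.1
      rw [ih _ (Finset.erase_ssubset hmem), Finset.card_erase_of_mem hmem]
      have : 1 ≤ D.card := Finset.card_pos.mpr h
      omega
    · simp [h, Finset.not_nonempty_iff_eq_empty.mp h]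

lemma range_sL (l : List (ℝ × ℝ)) (t : Bool) :
    (∑ i ∈ Finset.range l.length,
      if (Even i ↔ t = true) then (l.getD i (0, 0)).2 else 0) = sL t l := by
  induction l generalizing t with
  | nil => simp [sL]
  | cons a l ih =>
    rw [List.length_cons, Finset.sum_range_succ']
    have h1 : ∀ i : ℕ, ((a :: l).getD (i + 1) (0, 0)) = l.getD i (0, 0) := by
      intro i; rfl
    have h2 : ∀ i : ℕ, (Even (i + 1) ↔ t = true) ↔ (Even i ↔ (!t) = true) := by
      intro i; cases t <;> simp [Nat.even_add_one]
    have h3 : (∑ i ∈ Finset.range l.length,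
        if (Even (i + 1) ↔ t = true) then ((a :: l).getD (i + 1) (0, 0)).2 else 0)
        = sL (!t) l := by
      rw [← ih (!t)]
      refine Finset.sum_congr rfl fun i _ => ?_
      rw [h1 i]
      exact if_congr (h2 i) rfl rfl
    rw [h3]
    cases t <;> simp [sL, add_comm]

lemma icc_sL (l : List (ℝ × ℝ)) :
    (∑ i ∈ Finset.Icc 1 l.length, if Odd i then (l.getD (i - 1) (0, 0)).2 else 0)
      = sL true l := by
  rw [← Finset.Ico_add_one_right_eq_Icc, Finset.sum_Ico_eq_sum_range]
  have hlen : l.length + 1 - 1 = l.length := rfl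
  rw [hlen]
  rw [← range_sL l true]
  refine Finset.sum_congr rfl fun i _ => ?_
  have : Odd (1 + i) ↔ (Even i ↔ true = true) := by simp [Nat.odd_add_one, Nat.add_comm, Nat.odd_add]
  rw [if_congr this rfl rfl]
  simp

lemma chiB_eq_chi (D : Finset (ℝ × ℝ)) : chiB D = chi true D := by
  unfold chiB crossout crossoutList chi
  rw [← coAux_length true D, icc_sL]

/-- Main Lemma, first player Bob: eating any first morsel m gives Bob at most his
crossout score. -/
theorem main_lemma_bob (D : Finset (ℝ × ℝ)) (hD : TotallyOrderedPrefs D)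
    (hn : Odd D.card) (m : ℝ × ℝ) (hm : m ∈ D) :
    m.2 + chiB (D.erase m) ≤ chiB D := by
  rw [chiB_eq_chi, chiB_eq_chi]
  exact (key D.card D le_rfl hD).1 hn m hm
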